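/- In the two-site phosphorylation cycle with one shared kinase E and one shared phosphatase F (Motif (g)), if the total amounts satisfy μ₁F̄ ≤ Ē ≤ μ₂F̄, then the steady-state map S̄ = φ(S₁) = S₀(S₁) + S₁ + S₂(S₁) + X₁(S₁) + X₂(S₁) + Y₁(S₁) + Y₂(S₁) is strictly increasing on [0, +∞), where Y₁(s) = δ₁ s p₂(s)/p₃(s), Y₂(s) = η₂ s p₁(s)/p₃(s), S₀(s) = μ₁δ₁ s p₂(s)/(μ₂η₁ p₁(s)), S₂(s) = η₂ s p₁(s)/(δ₂ p₂(s)), X_k = μ_k Y_k, with p₁(s) = Ē + δ₁(Ē − μ₁F̄)s, p₂(s) = μ₂F̄ + η₂(μ₂F̄ − Ē)s, p₃(s) = μ₂ + μ₂(δ₁+η₂)s + δ₁η₂(μ₂−μ₁)s². Consequently there is a unique biologically meaningful steady state for each total amount S̄ ≥ 0. -/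
import Mathlib


open Set

/-- Monotonicity of `s ↦ k s (c + d s) / (K (A + B s))` on `[0,∞)`. -/
lemma ratio_mono (k K A B c d a b : ℝ) (hk : 0 ≤ k) (hK : 0 < K) (hA : 0 < A)
    (hc : 0 ≤ c) (hB : 0 ≤ B) (hd : 0 ≤ d) (ha : 0 ≤ a) (hab : a ≤ b) :
    k * a * (c + d * a) / (K * (A + B * a)) ≤ k * b * (c + d * b) / (K * (A + B * b)) := by
  have hb : 0 ≤ b := ha.trans hab
  have hDa : 0 < K * (A + B * a) :=
    mul_pos hK (add_pos_of_pos_of_nonneg hA (mul_nonneg hB ha))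
  have hDb : 0 < K * (A + B * b) :=
    mul_pos hK (add_pos_of_pos_of_nonneg hA (mul_nonneg hB hb))
  rw [div_le_div_iff₀ hDa hDb]
  have key : k * b * (c + d * b) * (K * (A + B * a)) - k * a * (c + d * a) * (K * (A + B * b))
      = (k * K) * ((b - a) * (c * A + d * A * (a + b) + d * B * (a * b))) := by ring
  have h1 : 0 ≤ (b - a) * (c * A + d * A * (a + b) + d * B * (a * b)) :=
    mul_nonneg (sub_nonneg.2 hab)
      (add_nonneg (add_nonneg (mul_nonneg hc hA.le)
        (mul_nonneg (mul_nonneg hd hA.le) (add_nonneg ha hb)))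
        (mul_nonneg (mul_nonneg hd hB) (mul_nonneg ha hb)))
  have h2 : 0 ≤ (k * K) * ((b - a) * (c * A + d * A * (a + b) + d * B * (a * b))) :=
    mul_nonneg (mul_nonneg hk hK.le) h1
  linarith

/-- Monotonicity of `s ↦ (c s + d s²) / (A + B s + C s²)` on `[0,∞)` when
`d B - c C ≥ 0`. -/
lemma ratio_mono2 (A B C c d a b : ℝ) (hA : 0 < A) (hB : 0 ≤ B) (hC : 0 ≤ C)
    (hc : 0 ≤ c) (hd : 0 ≤ d) (hkey : 0 ≤ d * B - c * C) (ha : 0 ≤ a) (hab : a ≤ b) :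
    (c * a + d * a ^ 2) / (A + B * a + C * a ^ 2)
      ≤ (c * b + d * b ^ 2) / (A + B * b + C * b ^ 2) := by
  have hb : 0 ≤ b := ha.trans hab
  have hDa : 0 < A + B * a + C * a ^ 2 :=
    add_pos_of_pos_of_nonneg (add_pos_of_pos_of_nonneg hA (mul_nonneg hB ha))
      (mul_nonneg hC (sq_nonneg a))
  have hDb : 0 < A + B * b + C * b ^ 2 :=
    add_pos_of_pos_of_nonneg (add_pos_of_pos_of_nonneg hA (mul_nonneg hB hb))
      (mul_nonneg hC (sq_nonneg b))
  rw [div_le_div_iff₀ hDa hDb]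
  have key : (c * b + d * b ^ 2) * (A + B * a + C * a ^ 2)
      - (c * a + d * a ^ 2) * (A + B * b + C * b ^ 2)
      = (b - a) * (c * A + d * A * (a + b) + (d * B - c * C) * (a * b)) := by ring
  have h1 : 0 ≤ (b - a) * (c * A + d * A * (a + b) + (d * B - c * C) * (a * b)) :=
    mul_nonneg (sub_nonneg.2 hab)
      (add_nonneg (add_nonneg (mul_nonneg hc hA.le)
        (mul_nonneg (mul_nonneg hd hA.le) (add_nonneg ha hb)))
        (mul_nonneg hkey (mul_nonneg ha hb)))
  linarith

/-- Motif (g) (shared kinase and shared phosphatase): if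
`μ₁F̄ ≤ Ē ≤ μ₂F̄` then the steady-state map `φ(S₁)` is strictly increasing on
`[0, ∞)`, and for each total amount `S̄ ≥ 0` there is a unique biologically
meaningful steady state. -/
theorem motif_g_monostationary (η₁ η₂ δ₁ δ₂ μ₁ μ₂ Ebar Fbar : ℝ)
    (hη₁ : 0 < η₁) (hη₂ : 0 < η₂) (hδ₁ : 0 < δ₁) (hδ₂ : 0 < δ₂)
    (hμ₁ : 0 < μ₁) (hμ₂ : 0 < μ₂) (hE : 0 < Ebar) (hF : 0 < Fbar)
    (h₁ : μ₁ * Fbar ≤ Ebar) (h₂ : Ebar ≤ μ₂ * Fbar) :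
    let p₁ : ℝ → ℝ := fun s => Ebar + δ₁ * (Ebar - μ₁ * Fbar) * s
    let p₂ : ℝ → ℝ := fun s => μ₂ * Fbar + η₂ * (μ₂ * Fbar - Ebar) * s
    let p₃ : ℝ → ℝ := fun s =>
      μ₂ + μ₂ * (δ₁ + η₂) * s + δ₁ * η₂ * (μ₂ - μ₁) * s ^ 2
    let Y₁ : ℝ → ℝ := fun s => δ₁ * s * p₂ s / p₃ s
    let Y₂ : ℝ → ℝ := fun s => η₂ * s * p₁ s / p₃ s
    let S₀ : ℝ → ℝ := fun s => μ₁ * δ₁ * s * p₂ s / (μ₂ * η₁ * p₁ s)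
    let S₂ : ℝ → ℝ := fun s => η₂ * s * p₁ s / (δ₂ * p₂ s)
    let φ : ℝ → ℝ := fun s =>
      S₀ s + s + S₂ s + μ₁ * Y₁ s + μ₂ * Y₂ s + Y₁ s + Y₂ s
    StrictMonoOn φ (Ici 0) ∧
      ∀ S : ℝ, 0 ≤ S → ∃! s, s ∈ Ici (0 : ℝ) ∧ φ s = S := by
  intro p₁ p₂ p₃ Y₁ Y₂ S₀ S₂ φ
  have hμ : μ₁ ≤ μ₂ := by nlinarith
  have hB₁ : 0 ≤ δ₁ * (Ebar - μ₁ * Fbar) := mul_nonneg hδ₁.le (by linarith)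
  have hB₂ : 0 ≤ η₂ * (μ₂ * Fbar - Ebar) := mul_nonneg hη₂.le (by linarith)
  have hp₁ : ∀ s, 0 ≤ s → 0 < p₁ s := fun s hs =>
    add_pos_of_pos_of_nonneg hE (mul_nonneg hB₁ hs)
  have hp₂ : ∀ s, 0 ≤ s → 0 < p₂ s := fun s hs =>
    add_pos_of_pos_of_nonneg (mul_pos hμ₂ hF) (mul_nonneg hB₂ hs)
  have hp₃ : ∀ s, 0 ≤ s → 0 < p₃ s := fun s hs =>
    add_pos_of_pos_of_nonneg
      (add_pos_of_pos_of_nonneg hμ₂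
        (mul_nonneg (mul_nonneg hμ₂.le (by linarith)) hs))
      (mul_nonneg (mul_nonneg (mul_nonneg hδ₁.le hη₂.le) (by linarith)) (sq_nonneg s))
  -- the combined numerator coefficients for (1+μ₁)Y₁ + (1+μ₂)Y₂
  set c₀ : ℝ := (1 + μ₁) * (δ₁ * (μ₂ * Fbar)) + (1 + μ₂) * (η₂ * Ebar) with hc₀def
  set c₁ : ℝ := δ₁ * η₂ * (μ₂ - μ₁) * (Ebar + Fbar) with hc₁def
  have hc₀ : 0 ≤ c₀ := by
    have : (0:ℝ) < (1 + μ₁) * (δ₁ * (μ₂ * Fbar)) :=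
      mul_pos (by linarith) (mul_pos hδ₁ (mul_pos hμ₂ hF))
    have : (0:ℝ) < (1 + μ₂) * (η₂ * Ebar) := mul_pos (by linarith) (mul_pos hη₂ hE)
    rw [hc₀def]; nlinarith
  have hc₁ : 0 ≤ c₁ :=
    mul_nonneg (mul_nonneg (mul_nonneg hδ₁.le hη₂.le) (by linarith)) (by linarith)
  have hkey : 0 ≤ c₁ * (μ₂ * (δ₁ + η₂)) - c₀ * (δ₁ * η₂ * (μ₂ - μ₁)) := by
    have h3 : c₁ * (μ₂ * (δ₁ + η₂)) - c₀ * (δ₁ * η₂ * (μ₂ - μ₁))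
        = (δ₁ * η₂ * (μ₂ - μ₁)) *
          (δ₁ * μ₂ * (Ebar - μ₁ * Fbar) + η₂ * (μ₂ * Fbar - Ebar)) := by
      rw [hc₀def, hc₁def]; ring
    rw [h3]
    exact mul_nonneg (mul_nonneg (mul_nonneg hδ₁.le hη₂.le) (by linarith))
      (add_nonneg (mul_nonneg (mul_nonneg hδ₁.le hμ₂.le) (by linarith))
        (mul_nonneg hη₂.le (by linarith)))
  -- the combined term equals a single rational function
  have hGeq : ∀ s, 0 ≤ s →
      μ₁ * Y₁ s + μ₂ * Y₂ s + Y₁ s + Y₂ s = (c₀ * s + c₁ * s ^ 2) / p₃ s := by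
    intro s hs
    have h3 : p₃ s ≠ 0 := (hp₃ s hs).ne'
    simp only [Y₁, Y₂]
    rw [eq_div_iff h3]
    field_simp
    simp only [p₁, p₂, p₃, hc₀def, hc₁def]
    ring
  have hmono : StrictMonoOn φ (Ici 0) := by
    intro a ha b hb hab
    have ha' : (0:ℝ) ≤ a := ha
    have hS₀ : S₀ a ≤ S₀ b := by
      have := ratio_mono (μ₁ * δ₁) (μ₂ * η₁) Ebar (δ₁ * (Ebar - μ₁ * Fbar))
        (μ₂ * Fbar) (η₂ * (μ₂ * Fbar - Ebar)) a b
        (mul_nonneg hμ₁.le hδ₁.le) (mul_pos hμ₂ hη₁) hE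
        (mul_pos hμ₂ hF).le hB₁ hB₂ ha' hab.le
      exact this
    have hS₂ : S₂ a ≤ S₂ b := by
      have := ratio_mono η₂ δ₂ (μ₂ * Fbar) (η₂ * (μ₂ * Fbar - Ebar))
        Ebar (δ₁ * (Ebar - μ₁ * Fbar)) a b
        hη₂.le hδ₂ (mul_pos hμ₂ hF) hE.le hB₂ hB₁ ha' hab.le
      exact this
    have hG : μ₁ * Y₁ a + μ₂ * Y₂ a + Y₁ a + Y₂ a
        ≤ μ₁ * Y₁ b + μ₂ * Y₂ b + Y₁ b + Y₂ b := by
      rw [hGeq a ha', hGeq b (ha'.trans hab.le)]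
      have := ratio_mono2 μ₂ (μ₂ * (δ₁ + η₂)) (δ₁ * η₂ * (μ₂ - μ₁)) c₀ c₁ a b
        hμ₂ (mul_nonneg hμ₂.le (by linarith))
        (mul_nonneg (mul_nonneg hδ₁.le hη₂.le) (by linarith))
        hc₀ hc₁ hkey ha' hab.le
      exact this
    show S₀ a + a + S₂ a + μ₁ * Y₁ a + μ₂ * Y₂ a + Y₁ a + Y₂ a
        < S₀ b + b + S₂ b + μ₁ * Y₁ b + μ₂ * Y₂ b + Y₁ b + Y₂ b
    linarith
  refine ⟨hmono, ?_⟩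
  -- continuity of φ on [0,∞)
  have hφc : ContinuousOn φ (Ici 0) := by
    have cS₀ : ContinuousOn S₀ (Ici 0) := by
      show ContinuousOn (fun s => μ₁ * δ₁ * s * p₂ s / (μ₂ * η₁ * p₁ s)) (Ici 0)
      exact ContinuousOn.div (by simp only [p₂]; fun_prop) (by simp only [p₁]; fun_prop)
        (fun x hx => (mul_pos (mul_pos hμ₂ hη₁) (hp₁ x hx)).ne')
    have cS₂ : ContinuousOn S₂ (Ici 0) := by
      show ContinuousOn (fun s => η₂ * s * p₁ s / (δ₂ * p₂ s)) (Ici 0)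
      exact ContinuousOn.div (by simp only [p₁]; fun_prop) (by simp only [p₂]; fun_prop)
        (fun x hx => (mul_pos hδ₂ (hp₂ x hx)).ne')
    have cY₁ : ContinuousOn Y₁ (Ici 0) := by
      show ContinuousOn (fun s => δ₁ * s * p₂ s / p₃ s) (Ici 0)
      exact ContinuousOn.div (by simp only [p₂]; fun_prop) (by simp only [p₃]; fun_prop)
        (fun x hx => (hp₃ x hx).ne')
    have cY₂ : ContinuousOn Y₂ (Ici 0) := by
      show ContinuousOn (fun s => η₂ * s * p₁ s / p₃ s) (Ici 0)
      exact ContinuousOn.div (by simp only [p₁]; fun_prop) (by simp only [p₃]; fun_prop)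
        (fun x hx => (hp₃ x hx).ne')
    show ContinuousOn
      (fun s => S₀ s + s + S₂ s + μ₁ * Y₁ s + μ₂ * Y₂ s + Y₁ s + Y₂ s) (Ici 0)
    exact cS₀.add continuousOn_id |>.add cS₂ |>.add (continuousOn_const.mul cY₁)
      |>.add (continuousOn_const.mul cY₂) |>.add cY₁ |>.add cY₂
  have hφ0 : φ 0 = 0 := by
    simp only [φ, S₀, S₂, Y₁, Y₂]
    norm_num
  have hge : ∀ s, 0 ≤ s → s ≤ φ s := by
    intro s hs
    have n₂ : 0 ≤ p₂ s := (hp₂ s hs).le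
    have n₁ : 0 ≤ p₁ s := (hp₁ s hs).le
    have n₃ : 0 ≤ p₃ s := (hp₃ s hs).le
    have t0 : 0 ≤ S₀ s := div_nonneg
      (mul_nonneg (mul_nonneg (mul_nonneg hμ₁.le hδ₁.le) hs) n₂)
      (mul_nonneg (mul_nonneg hμ₂.le hη₁.le) n₁)
    have t2 : 0 ≤ S₂ s := div_nonneg
      (mul_nonneg (mul_nonneg hη₂.le hs) n₁) (mul_nonneg hδ₂.le n₂)
    have ty₁ : 0 ≤ Y₁ s := div_nonneg (mul_nonneg (mul_nonneg hδ₁.le hs) n₂) n₃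
    have ty₂ : 0 ≤ Y₂ s := div_nonneg (mul_nonneg (mul_nonneg hη₂.le hs) n₁) n₃
    show s ≤ S₀ s + s + S₂ s + μ₁ * Y₁ s + μ₂ * Y₂ s + Y₁ s + Y₂ s
    have : 0 ≤ μ₁ * Y₁ s := mul_nonneg hμ₁.le ty₁
    have : 0 ≤ μ₂ * Y₂ s := mul_nonneg hμ₂.le ty₂
    linarith
  intro S hS
  have hmem : S ∈ Icc (φ 0) (φ S) := by
    rw [hφ0]
    exact ⟨hS, hge S hS⟩
  have hsub : Icc (0:ℝ) S ⊆ Ici 0 := fun x hx => hx.1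
  obtain ⟨s, hsI, hseq⟩ := intermediate_value_Icc hS (hφc.mono hsub) hmem
  refine ⟨s, ⟨hsI.1, hseq⟩, ?_⟩
  intro y hy
  exact hmono.injOn hy.1 hsI.1 (hy.2.trans hseq.symm)
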